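/- Let B = P(ℤ) be the power set Boolean algebra of the integers and G = Aut(B). Then (B, G) does not satisfy (MVP1): taking A = B = ℕ and f the automorphism induced by the shift n ↦ n+1, there is no h ∈ Aut(P(ℤ)) with h(A) = f(A) = ℕ \ {0} and h(B) = B = ℕ. -/
import Mathlib


/-- An effect algebra: a partial algebra `(α; ⊕, 0, 1)`.  The partial operation is
encoded by a total function `add` together with a definedness predicate `D`. -/
structure EffectAlgebra (α : Type*) where
  D : α → α → Prop
  add : α → α → α
  zero : α
  one : α
  comm_def : ∀ a b, D a b → D b a
  comm : ∀ a b, D a b → add a b = add b a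
  assoc_def₁ : ∀ a b c, D a b → D (add a b) c → D b c
  assoc_def₂ : ∀ a b c, D a b → D (add a b) c → D a (add b c)
  assoc : ∀ a b c, D a b → D (add a b) c → add (add a b) c = add a (add b c)
  orth_exists : ∀ a, ∃! b, D a b ∧ add a b = one
  add_one : ∀ a, D a one → a = zero

namespace EffectAlgebra

variable {α : Type*}
open Classical

/-- The induced order: `a ≤ b` iff `∃ c, a ⊕ c = b`. -/
def le (E : EffectAlgebra α) (a b : α) : Prop := ∃ c, E.D a c ∧ E.add a c = b

/-- The orthosupplement `a'`. -/
noncomputable def orth (E : EffectAlgebra α) (a : α) : α := (E.orth_exists a).choose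

/-- Partial difference: `sub b a = b ⊖ a`, intended for `a ≤ b`. -/
noncomputable def sub (E : EffectAlgebra α) (b a : α) : α :=
  if h : ∃ c, E.D a c ∧ E.add a c = b then h.choose else E.zero

end EffectAlgebra

section BGpair

variable {α : Type*} [BooleanAlgebra α]

/-- `L(a,b) = {a ∧ f(b) : f ∈ G}`. -/
def Lset (G : Subgroup (α ≃o α)) (a b : α) : Set α := {x | ∃ f ∈ G, x = a ⊓ f b}

/-- `L⁺(a,b) = {g(a) ∧ f(b) : f, g ∈ G}`. -/
def Lplus (G : Subgroup (α ≃o α)) (a b : α) : Set α :=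
  {x | ∃ f ∈ G, ∃ g ∈ G, x = g a ⊓ f b}

/-- Condition (MVP1). -/
def MVP1 (G : Subgroup (α ≃o α)) : Prop :=
  ∀ (a b : α) (f : α ≃o α), f ∈ G → a ≤ b → f a ≤ b →
    ∃ h ∈ G, h a = f a ∧ h b = b

/-- Condition (MVP2): every element of `L(a,b)` lies below a maximal element of `L(a,b)`. -/
def MVP2 (G : Subgroup (α ≃o α)) : Prop :=
  ∀ (a b x : α), x ∈ Lset G a b →
    ∃ m ∈ Lset G a b, x ≤ m ∧ ∀ y ∈ Lset G a b, m ≤ y → y = m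

/-- The equivalence `a ∼_G b` iff `f(a) = b` for some `f ∈ G`. -/
def rG (G : Subgroup (α ≃o α)) (a b : α) : Prop := ∃ f ∈ G, f a = b

end BGpair

/-- `(P(ℤ), Aut(P(ℤ)))` does not satisfy (MVP1): with `A = B = ℕ ⊆ ℤ` and
`f` the shift automorphism, `A ⊆ B` and `f(A) ⊆ B`, but no automorphism `h` satisfies
`h(A) = f(A)` and `h(B) = B`. -/
theorem stmt16 (f : Set ℤ ≃o Set ℤ)
    (hf : ∀ X : Set ℤ, f X = (· + 1) '' X) :
    let N : Set ℤ := {n : ℤ | 0 ≤ n}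
    N ≤ N ∧ f N ≤ N ∧
    ¬ ∃ h : Set ℤ ≃o Set ℤ, h N = f N ∧ h N = N := by
  intro N
  refine ⟨le_refl _, ?_, ?_⟩
  · rw [hf]
    rintro x ⟨y, hy, rfl⟩
    simp only [N, Set.mem_setOf_eq] at hy ⊢
    omega
  · rintro ⟨h, h1, h2⟩
    have : f N = N := h1 ▸ h2
    rw [hf] at this
    have h0 : (0 : ℤ) ∈ N := by simp [N]
    rw [← this] at h0
    obtain ⟨y, hy, hy0⟩ := h0
    simp only [N, Set.mem_setOf_eq] at hy
    simp only at hy0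
    omega
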